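/- arXiv:2204.07048 — 2 statements merged into one kernel-verified Lean document; each statement's English description precedes it below -/
import Mathlib

section
/- Let M = (A,B;C,D) be a 2n×2n real free symplectic matrix, f ∈ L²(ℝⁿ), and φ ∈ L²(ℝⁿ) a window function. Define H(x) = |det B|^{−1/2} · exp(i·xᵀB⁻¹Ax/2) · f(x). Then for all w, u ∈ ℝⁿ, the short-time NSLCT satisfies V^M_φ[f](w,u) = exp(i·wᵀDB⁻¹w/2) · V_φ[H](B⁻¹w, u), where V_φ denotes the short-time Fourier transform. -/
open MeasureTheory Matrix
open scoped BigOperators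

noncomputable section

def FreeSymplectic {n : ℕ} (A B C D : Matrix (Fin n) (Fin n) ℝ) : Prop :=
  A * Bᵀ = B * Aᵀ ∧ C * Dᵀ = D * Cᵀ ∧ A * Dᵀ - B * Cᵀ = 1 ∧ B.det ≠ 0

def nsKer {n : ℕ} (A B D : Matrix (Fin n) (Fin n) ℝ) (x w : Fin n → ℝ) : ℂ :=
  (((2 * Real.pi) ^ (-(n : ℝ) / 2) * |B.det| ^ (-(1 : ℝ) / 2) : ℝ) : ℂ) *
    Complex.exp ((Complex.I / 2) *
      ((w ⬝ᵥ ((D * B⁻¹) *ᵥ w) - 2 * (w ⬝ᵥ ((B⁻¹)ᵀ *ᵥ x)) + x ⬝ᵥ ((B⁻¹ * A) *ᵥ x) : ℝ) : ℂ))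

/-- The short-time NSLCT `V^M_φ[f](w, u)`. -/
def stNslct {n : ℕ} (A B D : Matrix (Fin n) (Fin n) ℝ) (φ f : (Fin n → ℝ) → ℂ)
    (w u : Fin n → ℝ) : ℂ :=
  ∫ x, f x * (starRingEnd ℂ) (φ (x - u)) * nsKer A B D x w

/-- The short-time Fourier transform `V_φ[f](w, u)`. -/
def stft {n : ℕ} (φ f : (Fin n → ℝ) → ℂ) (w u : Fin n → ℝ) : ℂ :=
  (((2 * Real.pi) ^ (-(n : ℝ) / 2) : ℝ) : ℂ) *
    ∫ x, f x * (starRingEnd ℂ) (φ (x - u)) * Complex.exp (-Complex.I * ((w ⬝ᵥ x : ℝ) : ℂ))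

/-- relation between the short-time NSLCT and the short-time Fourier
transform of the chirped signal `H(x) = |det B|^{-1/2} exp(i xᵀ B⁻¹ A x / 2) f(x)`. -/
theorem stNslct_eq_stft_of_chirp {n : ℕ} (hn : 1 ≤ n)
    (A B C D : Matrix (Fin n) (Fin n) ℝ) (hM : FreeSymplectic A B C D)
    (f φ : (Fin n → ℝ) → ℂ) (hf : MemLp f 2) (hφ : MemLp φ 2)
    (H : (Fin n → ℝ) → ℂ)
    (hH : ∀ x, H x = ((|B.det| ^ (-(1 : ℝ) / 2) : ℝ) : ℂ) *
      Complex.exp ((Complex.I / 2) * ((x ⬝ᵥ ((B⁻¹ * A) *ᵥ x) : ℝ) : ℂ)) * f x)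
    (w u : Fin n → ℝ) :
    stNslct A B D φ f w u =
      Complex.exp ((Complex.I / 2) * ((w ⬝ᵥ ((D * B⁻¹) *ᵥ w) : ℝ) : ℂ)) *
        stft φ H (B⁻¹ *ᵥ w) u := by
  unfold stNslct stft nsKer
  rw [← integral_const_mul, ← integral_const_mul]
  congr 1
  funext x
  rw [hH]
  have hdot : w ⬝ᵥ ((B⁻¹)ᵀ *ᵥ x) = (B⁻¹ *ᵥ w) ⬝ᵥ x := by
    rw [Matrix.dotProduct_mulVec, Matrix.vecMul_transpose]
  have harg : ((Complex.I / 2) *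
      ((w ⬝ᵥ ((D * B⁻¹) *ᵥ w) - 2 * (w ⬝ᵥ ((B⁻¹)ᵀ *ᵥ x)) + x ⬝ᵥ ((B⁻¹ * A) *ᵥ x) : ℝ) : ℂ)) =
      (Complex.I / 2) * ((w ⬝ᵥ ((D * B⁻¹) *ᵥ w) : ℝ) : ℂ) +
      (-Complex.I * (((B⁻¹ *ᵥ w) ⬝ᵥ x : ℝ) : ℂ)) +
      (Complex.I / 2) * ((x ⬝ᵥ ((B⁻¹ * A) *ᵥ x) : ℝ) : ℂ) := by
    rw [← hdot]; push_cast; ring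
  rw [harg, Complex.exp_add, Complex.exp_add]
  push_cast [Real.rpow_natCast]
  ring
end
end

section
/- Let M = (A,B;C,D) be a 2n×2n real free symplectic matrix, f ∈ L²(ℝⁿ), and φ ∈ L²(ℝⁿ) a window function. For fixed u ∈ ℝⁿ define F_u(x) = exp(i·xᵀB⁻¹Ax/2) · f(x) · conj(φ(x−u)). Then for all w ∈ ℝⁿ, |F[F_u](w)| = |det B|^{1/2} · |V^M_φ[f](Bw, u)|. -/
open MeasureTheory Matrix
open scoped BigOperators

noncomputable section

def nFourier {n : ℕ} (f : (Fin n → ℝ) → ℂ) (w : Fin n → ℝ) : ℂ :=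
  (((2 * Real.pi) ^ (-(n : ℝ) / 2) : ℝ) : ℂ) *
    ∫ x, f x * Complex.exp (-Complex.I * ((w ⬝ᵥ x : ℝ) : ℂ))

/-- for `F_u(x) = exp(i xᵀB⁻¹Ax/2) f(x) conj(φ(x-u))`, one has
`|F[F_u](w)| = |det B|^{1/2} |V^M_φ[f](Bw, u)|`. -/
theorem abs_fourier_windowed_chirp {n : ℕ} (hn : 1 ≤ n)
    (A B C D : Matrix (Fin n) (Fin n) ℝ) (hM : FreeSymplectic A B C D)
    (f φ : (Fin n → ℝ) → ℂ) (hf : MemLp f 2) (hφ : MemLp φ 2)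
    (u : Fin n → ℝ) (Fu : (Fin n → ℝ) → ℂ)
    (hFu : ∀ x, Fu x = Complex.exp ((Complex.I / 2) * ((x ⬝ᵥ ((B⁻¹ * A) *ᵥ x) : ℝ) : ℂ)) *
      f x * (starRingEnd ℂ) (φ (x - u)))
    (w : Fin n → ℝ) :
    ‖nFourier Fu w‖ = |B.det| ^ ((1 : ℝ) / 2) * ‖stNslct A B D φ f (B *ᵥ w) u‖ := by
  obtain ⟨h1, h2, h3, hB⟩ := hM
  have hBinv : B⁻¹ * B = 1 := nonsing_inv_mul B (isUnit_iff_ne_zero.mpr hB)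
  set Q : ℝ := (B *ᵥ w) ⬝ᵥ ((D * B⁻¹) *ᵥ (B *ᵥ w)) with hQ
  have hdpos : 0 < |B.det| := abs_pos.mpr hB
  have hcpos : 0 < (2 * Real.pi) ^ (-(n : ℝ) / 2) :=
    Real.rpow_pos_of_pos (by positivity) _
  set c : ℝ := (2 * Real.pi) ^ (-(n : ℝ) / 2)
  set d : ℝ := |B.det| ^ (-(1 : ℝ) / 2) with hd
  have hdpos' : 0 < d := Real.rpow_pos_of_pos hdpos _
  have key : ∀ x, f x * (starRingEnd ℂ) (φ (x - u)) * nsKer A B D x (B *ᵥ w)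
      = ((d : ℂ) * Complex.exp ((Complex.I / 2) * (Q : ℂ))) *
        ((c : ℂ) * (Fu x * Complex.exp (-Complex.I * ((w ⬝ᵥ x : ℝ) : ℂ)))) := by
    intro x
    have hdot : (B *ᵥ w) ⬝ᵥ ((B⁻¹)ᵀ *ᵥ x) = w ⬝ᵥ x := by
      rw [dotProduct_mulVec, vecMul_transpose, mulVec_mulVec, hBinv, one_mulVec]
    rw [hFu x, nsKer, hdot]
    rw [show ((Complex.I / 2) *
        ((Q - 2 * (w ⬝ᵥ x) + x ⬝ᵥ ((B⁻¹ * A) *ᵥ x) : ℝ) : ℂ)) =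
        (Complex.I / 2) * (Q : ℂ) + (-Complex.I * ((w ⬝ᵥ x : ℝ) : ℂ)) +
        (Complex.I / 2) * ((x ⬝ᵥ ((B⁻¹ * A) *ᵥ x) : ℝ) : ℂ) by push_cast; ring]
    rw [Complex.exp_add, Complex.exp_add]
    push_cast
    ring
  have hst : stNslct A B D φ f (B *ᵥ w) u
      = ((d : ℂ) * Complex.exp ((Complex.I / 2) * (Q : ℂ))) *
        ((c : ℂ) * ∫ x, Fu x * Complex.exp (-Complex.I * ((w ⬝ᵥ x : ℝ) : ℂ))) := by
    unfold stNslct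
    simp_rw [key]
    rw [integral_const_mul, integral_const_mul]
  have hexp1 : ‖Complex.exp ((Complex.I / 2) * (Q : ℂ))‖ = 1 := by
    rw [Complex.norm_exp]
    simp [Complex.mul_re]
  rw [hst, nFourier]
  simp only [norm_mul, hexp1, Complex.norm_real, Real.norm_eq_abs,
    abs_of_pos hcpos, abs_of_pos hdpos']
  rw [hd]
  rw [show |B.det| ^ ((1:ℝ)/2) * (|B.det| ^ (-(1:ℝ)/2) * 1 *
      ((2 * Real.pi) ^ (-(n : ℝ) / 2) * ‖∫ x, Fu x * Complex.exp (-Complex.I * ((w ⬝ᵥ x : ℝ) : ℂ))‖))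
      = (|B.det| ^ ((1:ℝ)/2) * |B.det| ^ (-(1:ℝ)/2)) *
        ((2 * Real.pi) ^ (-(n : ℝ) / 2) * ‖∫ x, Fu x * Complex.exp (-Complex.I * ((w ⬝ᵥ x : ℝ) : ℂ))‖) by ring]
  rw [← Real.rpow_add hdpos]
  norm_num
  exact Or.inl hcpos.le
end
end
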